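/- Let M, N ≥ 1 be integers, let a_b, a_d ∈ ℂ^M have unit-modulus entries with a_b^H a_d ≠ 0, let β_d, β_br, β_ru, τ̄ > 0, let u be a standard complex Gaussian random vector in ℂ^N, and set h_d = √β_d·a_d, Y = ∑_{n=1}^N |u_n|, ψ = a_b^H a_d/|a_b^H a_d|, and SNR_unfav = ‖h_d + √(β_br β_ru)·ψ·Y·a_b‖₂²·τ̄. Then E[SNR_unfav] = (β_d·M + N·√π·|a_b^H a_d|·√(β_d β_br β_ru) + β_br·β_ru·M·(N + π·N(N−1)/4))·τ̄. -/

import Mathlib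

open MeasureTheory ProbabilityTheory Complex

noncomputable section

/-- A standard complex Gaussian random variable: real and imaginary parts are
independent real Gaussians with mean 0 and variance 1/2. -/
def IsStdCGaussian {Ω : Type*} [MeasurableSpace Ω] (P : Measure Ω) (X : Ω → ℂ) : Prop :=
  Measurable X ∧
    P.map (fun ω => (X ω).re) = gaussianReal 0 (1/2) ∧
    P.map (fun ω => (X ω).im) = gaussianReal 0 (1/2) ∧
    IndepFun (fun ω => (X ω).re) (fun ω => (X ω).im) P

/-- A standard complex Gaussian random vector: i.i.d. standard complex Gaussian entries. -/
def IsStdCGaussianVec {Ω : Type*} [MeasurableSpace Ω] (P : Measure Ω) {n : ℕ}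
    (X : Ω → Fin n → ℂ) : Prop :=
  (∀ i, IsStdCGaussian P (fun ω => X ω i)) ∧
    iIndepFun (fun i ω => X ω i) P

/-- Squared Euclidean norm of a complex vector. -/
def cnormSq {m : ℕ} (v : Fin m → ℂ) : ℝ := ∑ i, ‖v i‖ ^ 2

/-- Hermitian inner product `a^H b`. -/
def dotH {m : ℕ} (a b : Fin m → ℂ) : ℂ := ∑ i, (starRingEnd ℂ) (a i) * b i

lemma aux_integrable_cpx {q : ℝ} (hq : -2 < q) :
    Integrable (fun z : ℂ => ‖z‖ ^ q * Real.exp (- ‖z‖ ^ (2:ℝ))) := by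
  by_contra h
  have h0 := integral_undef h
  rw [Complex.integral_rpow_mul_exp_neg_rpow one_le_two hq] at h0
  have hΓ : 0 < Real.Gamma ((q + 2) / 2) :=
    Real.Gamma_pos_of_pos (by linarith)
  have : (0:ℝ) < 2 * Real.pi / 2 * Real.Gamma ((q + 2) / 2) := by positivity
  linarith [this, h0.symm]

lemma aux_gauss_prod :
    (gaussianReal 0 (1/2)).prod (gaussianReal 0 (1/2)) =
      ((volume : Measure ℝ).prod (volume : Measure ℝ)).withDensity
        (fun p => gaussianPDF 0 (1/2) p.1 * gaussianPDF 0 (1/2) p.2) := by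
  have hv : (1/2 : NNReal) ≠ 0 := by norm_num
  refine Measure.prod_eq (fun s t hs ht => ?_)
  rw [withDensity_apply _ (hs.prod ht), gaussianReal_of_var_ne_zero _ hv,
    withDensity_apply _ hs, withDensity_apply _ ht,
    ← Measure.prod_restrict, MeasureTheory.lintegral_prod]
  · simp_rw [lintegral_const_mul _ (measurable_gaussianPDF 0 (1/2)),
      lintegral_mul_const _ (measurable_gaussianPDF 0 (1/2))]
  · exact ((measurable_gaussianPDF 0 (1/2)).comp measurable_fst).mul
      ((measurable_gaussianPDF 0 (1/2)).comp measurable_snd) |>.aemeasurable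

lemma aux_density_eq (p : ℝ × ℝ) :
    gaussianPDF 0 (1/2) p.1 * gaussianPDF 0 (1/2) p.2 =
      ((gaussianPDFReal 0 (1/2) p.1 * gaussianPDFReal 0 (1/2) p.2).toNNReal : ENNReal) := by
  rw [gaussianPDF, gaussianPDF, ENNReal.ofReal, ENNReal.ofReal, ← ENNReal.coe_mul,
    ← Real.toNNReal_mul (le_of_lt (gaussianPDFReal_pos _ _ _ (by norm_num)))]

lemma aux_pdfReal (x : ℝ) :
    gaussianPDFReal 0 (1/2) x = (Real.sqrt Real.pi)⁻¹ * Real.exp (- x ^ 2) := by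
  rw [gaussianPDFReal]
  have h1 : (2 * Real.pi * ((1/2 : NNReal) : ℝ)) = Real.pi := by push_cast; ring
  have h2 : (2 * ((1/2 : NNReal) : ℝ)) = 1 := by push_cast; ring
  rw [h1, h2]
  norm_num

lemma aux_density_mul (z : ℂ) :
    gaussianPDFReal 0 (1/2) z.re * gaussianPDFReal 0 (1/2) z.im =
      Real.pi⁻¹ * Real.exp (- ‖z‖ ^ (2:ℝ)) := by
  rw [aux_pdfReal, aux_pdfReal]
  have h1 : (Real.sqrt Real.pi)⁻¹ * (Real.sqrt Real.pi)⁻¹ = Real.pi⁻¹ := by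
    rw [← mul_inv, Real.mul_self_sqrt Real.pi_pos.le]
  have h2 : ‖z‖ ^ (2:ℝ) = z.re ^ 2 + z.im ^ 2 := by
    rw [Real.rpow_two, Complex.sq_norm, Complex.normSq_apply]; ring
  calc (Real.sqrt Real.pi)⁻¹ * Real.exp (-z.re ^ 2) *
        ((Real.sqrt Real.pi)⁻¹ * Real.exp (-z.im ^ 2))
      = ((Real.sqrt Real.pi)⁻¹ * (Real.sqrt Real.pi)⁻¹) *
        (Real.exp (-z.re ^ 2) * Real.exp (-z.im ^ 2)) := by ring
    _ = _ := by
        rw [h1, ← Real.exp_add, h2, show -z.re^2 + -z.im^2 = -(z.re^2+z.im^2) by ring]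

/-- Main moment lemma: `E[|X|^q] = Γ((q+2)/2)` and integrability. -/
lemma stdCGaussian_moment {Ω : Type*} [MeasurableSpace Ω] (P : Measure Ω)
    [IsProbabilityMeasure P] (X : Ω → ℂ) (hX : IsStdCGaussian P X) {q : ℝ} (hq : -2 < q) :
    Integrable (fun ω => ‖X ω‖ ^ q) P ∧
      ∫ ω, ‖X ω‖ ^ q ∂P = Real.Gamma ((q + 2) / 2) := by
  obtain ⟨hXm, hre, him, hind⟩ := hX
  set γ := gaussianReal 0 (1/2) with hγ
  have hrem : Measurable fun ω => (X ω).re := Complex.measurable_re.comp hXm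
  have himm : Measurable fun ω => (X ω).im := Complex.measurable_im.comp hXm
  have hmap : P.map (fun ω => ((X ω).re, (X ω).im)) = γ.prod γ := by
    rw [(indepFun_iff_map_prod_eq_prod_map_map hrem.aemeasurable himm.aemeasurable).mp hind,
      hre, him]
  set G : ℝ × ℝ → ℝ := fun p => ‖Complex.measurableEquivRealProd.symm p‖ ^ q with hG
  have hGm : Measurable G :=
    (Complex.measurableEquivRealProd.symm.measurable.norm).pow measurable_const
  have hcomp : (fun ω => ‖X ω‖ ^ q) =
      fun ω => G ((X ω).re, (X ω).im) := by
    funext ω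
    rfl
  set dnn : ℝ × ℝ → NNReal :=
    fun p => (gaussianPDFReal 0 (1/2) p.1 * gaussianPDFReal 0 (1/2) p.2).toNNReal with hdnn
  have hdnnm : Measurable dnn :=
    (((measurable_gaussianPDFReal 0 (1/2)).comp measurable_fst).mul
      ((measurable_gaussianPDFReal 0 (1/2)).comp measurable_snd)).real_toNNReal
  have hprod : γ.prod γ = ((volume : Measure ℝ).prod volume).withDensity
      (fun p => (dnn p : ENNReal)) := by
    rw [hγ, aux_gauss_prod]
    congr 1
    funext p
    exact aux_density_eq p
  set F : ℂ → ℝ := fun z => Real.pi⁻¹ * (‖z‖ ^ q * Real.exp (- ‖z‖ ^ (2:ℝ))) with hF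
  have hsmul : (fun p => dnn p • G p) =
      fun p => F (Complex.measurableEquivRealProd.symm p) := by
    funext p
    have hnn : 0 ≤ gaussianPDFReal 0 (1/2) p.1 * gaussianPDFReal 0 (1/2) p.2 :=
      mul_nonneg (gaussianPDFReal_nonneg _ _ _) (gaussianPDFReal_nonneg _ _ _)
    have h1 : (dnn p : ℝ) = gaussianPDFReal 0 (1/2) p.1 * gaussianPDFReal 0 (1/2) p.2 :=
      Real.coe_toNNReal _ hnn
    have hz1 : (Complex.measurableEquivRealProd.symm p).re = p.1 := rfl
    have hz2 : (Complex.measurableEquivRealProd.symm p).im = p.2 := rfl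
    have hd := aux_density_mul (Complex.measurableEquivRealProd.symm p)
    rw [hz1, hz2] at hd
    rw [NNReal.smul_def, h1]
    simp only [hF, hG, hd]
    rw [smul_eq_mul]
    ring
  have hFint : Integrable F := (aux_integrable_cpx hq).const_mul _
  have hmp : MeasurePreserving Complex.measurableEquivRealProd
      (volume : Measure ℂ) ((volume : Measure ℝ).prod volume) := by
    rw [← Measure.volume_eq_prod]
    exact Complex.volume_preserving_equiv_real_prod
  have hemb : MeasurableEmbedding (Complex.measurableEquivRealProd : ℂ → ℝ × ℝ) :=
    Complex.measurableEquivRealProd.measurableEmbedding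
  have hcompF : ((fun p => dnn p • G p) ∘ Complex.measurableEquivRealProd) = F := by
    funext z
    simp only [Function.comp]
    rw [congrFun hsmul _, MeasurableEquiv.symm_apply_apply]
  have hint2 : Integrable (fun p => dnn p • G p)
      ((volume : Measure ℝ).prod volume) := by
    rw [← hmp.integrable_comp_emb hemb, hcompF]
    exact hFint
  have hGint : Integrable G (γ.prod γ) := by
    rw [hprod, integrable_withDensity_iff_integrable_smul hdnnm]
    exact hint2
  have hpairm : AEMeasurable (fun ω => ((X ω).re, (X ω).im)) P :=
    (hrem.prodMk himm).aemeasurable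
  constructor
  · rw [hcomp]
    exact (integrable_map_measure hGm.aestronglyMeasurable hpairm).mp (hmap ▸ hGint)
  · calc ∫ ω, ‖X ω‖ ^ q ∂P
        = ∫ ω, G ((X ω).re, (X ω).im) ∂P := by rw [hcomp]
      _ = ∫ p, G p ∂(γ.prod γ) := by
          rw [← hmap, integral_map hpairm hGm.aestronglyMeasurable]
      _ = ∫ p, dnn p • G p ∂((volume : Measure ℝ).prod volume) := by
          rw [hprod, integral_withDensity_eq_integral_smul hdnnm]
      _ = ∫ z : ℂ, F z := by
          rw [← hmp.integral_comp hemb]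
          exact congrArg (fun f : ℂ → ℝ => ∫ z, f z) hcompF
      _ = Real.pi⁻¹ * ∫ z : ℂ, ‖z‖ ^ q * Real.exp (- ‖z‖ ^ (2:ℝ)) := by
          rw [hF, integral_const_mul]
      _ = Real.Gamma ((q + 2) / 2) := by
          rw [Complex.integral_rpow_mul_exp_neg_rpow one_le_two hq]
          field_simp

lemma stdCGaussian_abs_moment1 {Ω : Type*} [MeasurableSpace Ω] (P : Measure Ω)
    [IsProbabilityMeasure P] (X : Ω → ℂ) (hX : IsStdCGaussian P X) :
    Integrable (fun ω => ‖X ω‖) P ∧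
      ∫ ω, ‖X ω‖ ∂P = Real.sqrt Real.pi / 2 := by
  have h := stdCGaussian_moment P X hX (q := 1) (by norm_num)
  have he : (fun ω => ‖X ω‖ ^ (1:ℝ)) = fun ω => ‖X ω‖ := by
    funext ω; rw [Real.rpow_one]
  have hg : Real.Gamma (((1:ℝ) + 2) / 2) = Real.sqrt Real.pi / 2 := by
    have h32 : ((1:ℝ)+2)/2 = 1/2 + 1 := by norm_num
    rw [h32, Real.Gamma_add_one (by norm_num), Real.Gamma_one_half_eq]; ring
  rw [he, hg] at h
  exact h

lemma stdCGaussian_abs_moment2 {Ω : Type*} [MeasurableSpace Ω] (P : Measure Ω)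
    [IsProbabilityMeasure P] (X : Ω → ℂ) (hX : IsStdCGaussian P X) :
    Integrable (fun ω => ‖X ω‖ ^ 2) P ∧
      ∫ ω, ‖X ω‖ ^ 2 ∂P = 1 := by
  have h := stdCGaussian_moment P X hX (q := 2) (by norm_num)
  have he : (fun ω => ‖X ω‖ ^ (2:ℝ)) = fun ω => ‖X ω‖ ^ 2 := by
    funext ω; rw [Real.rpow_two, sq]
  have hg : Real.Gamma (((2:ℝ) + 2) / 2) = 1 := by
    have h22 : ((2:ℝ)+2)/2 = 2 := by norm_num
    rw [h22, Real.Gamma_two]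
  rw [he, hg] at h
  exact h

lemma snr_expand {M : ℕ} (a_b a_d : Fin M → ℂ) (hab : ∀ i, ‖a_b i‖ = 1)
    (had : ∀ i, ‖a_d i‖ = 1) (habd : dotH a_b a_d ≠ 0)
    (βd c : ℝ) (hβd : 0 ≤ βd) (hc : 0 ≤ c)
    (ψ : ℂ) (hψ : ψ = dotH a_b a_d / (‖dotH a_b a_d‖ : ℂ)) (y : ℝ) :
    cnormSq (fun i => (Real.sqrt βd : ℂ) * a_d i + (c : ℂ) * ψ * (y : ℂ) * a_b i) =
      βd * M + 2 * (Real.sqrt βd * c * ‖dotH a_b a_d‖) * y + c^2 * M * y^2 := by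
  set s : ℂ := dotH a_b a_d with hs
  have habs0 : ‖s‖ ≠ 0 := norm_ne_zero_iff.mpr habd
  have habs0' : ((‖s‖ : ℝ) : ℂ) ≠ 0 := Complex.ofReal_ne_zero.mpr habs0
  have hψs : (starRingEnd ℂ) ψ * s = ((‖s‖ : ℝ) : ℂ) := by
    rw [hψ, map_div₀, Complex.conj_ofReal, div_mul_eq_mul_div, div_eq_iff habs0',
      mul_comm ((starRingEnd ℂ) s) s, Complex.mul_conj, Complex.normSq_eq_norm_sq]
    push_cast
    ring
  have hψabs : ‖ψ‖ = 1 := by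
    rw [hψ, norm_div, Complex.norm_real, norm_norm,
      div_self habs0]
  have hterm : ∀ i, ‖(Real.sqrt βd : ℂ) * a_d i
      + (c : ℂ) * ψ * (y : ℂ) * a_b i‖ ^ 2
      = (βd + c^2 * y^2)
        + 2 * (Real.sqrt βd * c * y) * ((starRingEnd ℂ) ψ
            * ((starRingEnd ℂ) (a_b i) * a_d i)).re := by
    intro i
    rw [Complex.sq_norm, Complex.normSq_add]
    have h1 : Complex.normSq ((Real.sqrt βd : ℂ) * a_d i) = βd := by
      rw [Complex.normSq_mul, Complex.normSq_ofReal, Complex.normSq_eq_norm_sq, had i,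
        Real.mul_self_sqrt hβd]
      norm_num
    have h2 : Complex.normSq ((c : ℂ) * ψ * (y : ℂ) * a_b i) = c^2 * y^2 := by
      rw [Complex.normSq_mul, Complex.normSq_mul, Complex.normSq_mul,
        Complex.normSq_ofReal, Complex.normSq_ofReal, Complex.normSq_eq_norm_sq ψ,
        Complex.normSq_eq_norm_sq (a_b i), hψabs, hab i]
      ring
    have h3 : ((Real.sqrt βd : ℂ) * a_d i) * (starRingEnd ℂ) ((c : ℂ) * ψ * (y : ℂ) * a_b i)
        = ((Real.sqrt βd * c * y : ℝ) : ℂ)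
            * ((starRingEnd ℂ) ψ * ((starRingEnd ℂ) (a_b i) * a_d i)) := by
      rw [map_mul, map_mul, map_mul, Complex.conj_ofReal, Complex.conj_ofReal]
      push_cast
      ring
    rw [h1, h2, h3, Complex.re_ofReal_mul]
    ring
  have hsum : ∑ i, ((starRingEnd ℂ) ψ * ((starRingEnd ℂ) (a_b i) * a_d i)).re
      = ‖s‖ := by
    rw [← Complex.re_sum, ← Finset.mul_sum, ← _root_.dotH, ← hs, hψs, Complex.ofReal_re]
  unfold cnormSq
  simp_rw [hterm]
  rw [Finset.sum_add_distrib, Finset.sum_const, ← Finset.mul_sum, hsum,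
    Finset.card_univ, Fintype.card_fin, nsmul_eq_mul]
  ring

/-- Mean optimal SNR in the unfavourable scenario (LOS UE-BS channel, i.i.d. Rayleigh UE-RIS
channel):
`E[SNR_unfav] = (β_d M + N √π |a_b^H a_d| √(β_d β_br β_ru) + β_br β_ru M (N + πN(N-1)/4)) τ̄`. -/
theorem mean_snr_unfavourable
    {Ω : Type*} [MeasurableSpace Ω] (P : Measure Ω) [IsProbabilityMeasure P]
    (M N : ℕ) (hM : 1 ≤ M) (hN : 1 ≤ N)
    (a_b a_d : Fin M → ℂ) (hab : ∀ i, ‖a_b i‖ = 1)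
    (had : ∀ i, ‖a_d i‖ = 1) (habd : dotH a_b a_d ≠ 0)
    (βd βbr βru τ : ℝ) (hβd : 0 < βd) (hβbr : 0 < βbr) (hβru : 0 < βru) (hτ : 0 < τ)
    (u : Ω → Fin N → ℂ) (hu : IsStdCGaussianVec P u)
    (h_d : Fin M → ℂ) (hhd : h_d = fun i => (Real.sqrt βd : ℂ) * a_d i)
    (Y : Ω → ℝ) (hY : Y = fun ω => ∑ n, ‖u ω n‖)
    (ψ : ℂ) (hψ : ψ = dotH a_b a_d / (‖dotH a_b a_d‖ : ℂ))
    (SNR : Ω → ℝ)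
    (hSNR : SNR = fun ω =>
      cnormSq (fun i =>
        h_d i + (Real.sqrt (βbr * βru) : ℂ) * ψ * (Y ω : ℂ) * a_b i) * τ) :
    ∫ ω, SNR ω ∂P =
      (βd * M + N * Real.sqrt Real.pi * ‖dotH a_b a_d‖
          * Real.sqrt (βd * βbr * βru)
        + βbr * βru * M * (N + Real.pi * N * (N - 1) / 4)) * τ := by
  obtain ⟨hco, hind⟩ := hu
  have h1 := fun n => stdCGaussian_abs_moment1 P _ (hco n)
  have h2 := fun n => stdCGaussian_abs_moment2 P _ (hco n)
  have hm : ∀ n, Measurable (fun ω => ‖u ω n‖) :=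
    fun n => continuous_norm.measurable.comp (hco n).1
  have hYint : Integrable Y P := by
    rw [hY]; exact integrable_finset_sum _ (fun n _ => (h1 n).1)
  have hEY : ∫ ω, Y ω ∂P = N * (Real.sqrt Real.pi / 2) := by
    rw [hY, integral_finset_sum _ (fun n _ => (h1 n).1),
      Finset.sum_congr rfl (fun n _ => (h1 n).2), Finset.sum_const, Finset.card_univ,
      Fintype.card_fin, nsmul_eq_mul]
  have hmulint : ∀ n m : Fin N,
      Integrable (fun ω => ‖u ω n‖ * ‖u ω m‖) P := by
    intro n m
    by_cases h : n = m
    · subst h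
      simpa [sq] using (h2 n).1
    · have hi : IndepFun (fun ω => ‖u ω n‖) (fun ω => ‖u ω m‖) P :=
        (hind.indepFun h).comp continuous_norm.measurable
          continuous_norm.measurable
      exact hi.integrable_mul (h1 n).1 (h1 m).1
  have hmulval : ∀ n m : Fin N, n ≠ m →
      ∫ ω, ‖u ω n‖ * ‖u ω m‖ ∂P = Real.pi / 4 := by
    intro n m h
    have hi : IndepFun (fun ω => ‖u ω n‖) (fun ω => ‖u ω m‖) P :=
      (hind.indepFun h).comp continuous_norm.measurable
        continuous_norm.measurable
    have := hi.integral_mul_eq_mul_integral (hm n).aestronglyMeasurable (hm m).aestronglyMeasurable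
    rw [show (fun ω => ‖u ω n‖ * ‖u ω m‖)
        = (fun ω => ‖u ω n‖) * (fun ω => ‖u ω m‖) from rfl,
      this, (h1 n).2, (h1 m).2, div_mul_div_comm, Real.mul_self_sqrt Real.pi_pos.le]
    norm_num
  have hY2 : (fun ω => Y ω ^ 2)
      = fun ω => ∑ n, ∑ m, ‖u ω n‖ * ‖u ω m‖ := by
    funext ω; rw [hY, sq, Finset.sum_mul_sum]
  have hY2int : Integrable (fun ω => Y ω ^ 2) P := by
    rw [hY2]
    exact integrable_finset_sum _
      (fun n _ => integrable_finset_sum _ (fun m _ => hmulint n m))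
  have hEY2 : ∫ ω, Y ω ^ 2 ∂P = N * (1 + ((N : ℝ) - 1) * (Real.pi / 4)) := by
    rw [hY2, integral_finset_sum _
      (fun n _ => integrable_finset_sum _ (fun m _ => hmulint n m)),
      Finset.sum_congr rfl (fun n _ => integral_finset_sum _ (fun m _ => hmulint n m))]
    have hrow : ∀ n : Fin N, ∑ m, ∫ ω, ‖u ω n‖ * ‖u ω m‖ ∂P
        = 1 + ((N : ℝ) - 1) * (Real.pi / 4) := by
      intro n
      rw [← Finset.add_sum_erase _ _ (Finset.mem_univ n)]
      congr 1
      · rw [← (h2 n).2]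
        congr 1
        funext ω
        rw [sq]
      · rw [Finset.sum_congr rfl
          (fun m hm' => hmulval n m (fun he => (Finset.ne_of_mem_erase hm') he.symm)),
          Finset.sum_const, Finset.card_erase_of_mem (Finset.mem_univ n), Finset.card_univ,
          Fintype.card_fin, nsmul_eq_mul, Nat.cast_sub hN, Nat.cast_one]
    rw [Finset.sum_congr rfl (fun n _ => hrow n), Finset.sum_const, Finset.card_univ,
      Fintype.card_fin, nsmul_eq_mul]
  set c := Real.sqrt (βbr * βru) with hc
  have hSNR' : SNR = fun ω =>
      (βd * M + 2 * (Real.sqrt βd * c * ‖dotH a_b a_d‖) * Y ω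
        + c ^ 2 * M * Y ω ^ 2) * τ := by
    rw [hSNR]
    funext ω
    congr 1
    rw [hhd]
    exact snr_expand a_b a_d hab had habd βd c hβd.le (Real.sqrt_nonneg _) ψ hψ (Y ω)
  rw [hSNR']
  rw [show (fun ω => (βd * M + 2 * (Real.sqrt βd * c * ‖dotH a_b a_d‖) * Y ω
        + c ^ 2 * M * Y ω ^ 2) * τ)
      = fun ω => (βd * M + 2 * (Real.sqrt βd * c * ‖dotH a_b a_d‖) * Y ω
        + c ^ 2 * M * Y ω ^ 2) * τ from rfl, integral_mul_const]
  have hint1 : Integrable (fun ω => (βd * (M:ℝ))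
      + 2 * (Real.sqrt βd * c * ‖dotH a_b a_d‖) * Y ω) P :=
    (integrable_const _).add (hYint.const_mul _)
  have hintegral : ∫ ω, (βd * M + 2 * (Real.sqrt βd * c * ‖dotH a_b a_d‖) * Y ω
      + c ^ 2 * M * Y ω ^ 2) ∂P
      = βd * M + 2 * (Real.sqrt βd * c * ‖dotH a_b a_d‖)
          * (N * (Real.sqrt Real.pi / 2))
        + c ^ 2 * M * (N * (1 + ((N : ℝ) - 1) * (Real.pi / 4))) := by
    rw [integral_add hint1 (hY2int.const_mul _),
      integral_add (integrable_const _) (hYint.const_mul _),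
      integral_const, integral_const_mul, integral_const_mul, hEY, hEY2]
    simp [measure_univ]
  rw [hintegral]
  have hsq : c ^ 2 = βbr * βru := Real.sq_sqrt (mul_nonneg hβbr.le hβru.le)
  have hmul : Real.sqrt (βd * βbr * βru) = Real.sqrt βd * c := by
    rw [hc, mul_assoc, Real.sqrt_mul hβd.le]
  rw [hsq, hmul]
  ring
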